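/- Let H = (V_1 ∪ ... ∪ V_r, E) be an n-balanced r-uniform r-partite hypergraph with balanced chromatic number q satisfying 3 ≤ q < ∞. Then |E| ≥ (q-1)n / (r(r-1)). -/

import Mathlib

lemma window {α : Type*} [DecidableEq α] (c : α → ℕ) (M : ℕ) (hM : 1 ≤ M)
    (T : Finset α) : ∀ (D : ℕ), (∀ j ∈ T, c j ≤ M) → D ≤ ∑ j ∈ T, c j →
    ∃ S, S ⊆ T ∧ D ≤ ∑ j ∈ S, c j ∧ ∑ j ∈ S, c j < D + M := by
  induction T using Finset.induction_on with
  | empty =>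
    intro D _ hD
    simp only [Finset.sum_empty, Nat.le_zero] at hD
    exact ⟨∅, Finset.Subset.refl _, by simp [hD], by simp [hD]; omega⟩
  | @insert j T hj ih =>
    intro D hc hD
    rcases Nat.eq_zero_or_pos D with h0 | hpos
    · exact ⟨∅, by simp, by omega, by simp [h0]; omega⟩
    by_cases hcj : D ≤ c j
    · refine ⟨{j}, by simp, by simpa using hcj, ?_⟩
      have := hc j (Finset.mem_insert_self j T)
      simp only [Finset.sum_singleton]; omega
    · push_neg at hcj
      rw [Finset.sum_insert hj] at hD
      obtain ⟨S, hST, h1, h2⟩ := ih (D - c j)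
        (fun x hx => hc x (Finset.mem_insert_of_mem hx)) (by omega)
      have hjS : j ∉ S := fun h => hj (hST h)
      refine ⟨insert j S, ?_, ?_, ?_⟩
      · exact Finset.insert_subset_insert j hST
      · rw [Finset.sum_insert hjS]; omega
      · rw [Finset.sum_insert hjS]; omega


lemma grouping {β γ : Type*} [DecidableEq β] [DecidableEq γ] (π0 π1 : β → γ) (F : Finset β) :
    ∃ G : Finset (Finset β),
      G.biUnion id = F ∧
      (∀ g ∈ G, g.Nonempty) ∧
      (∀ g ∈ G, ∀ g' ∈ G, g ≠ g' → Disjoint g g' ∧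
        Disjoint (g.image π0) (g'.image π0) ∧ Disjoint (g.image π1) (g'.image π1)) ∧
      (∀ g ∈ G, (g.image π0).card + (g.image π1).card ≤ g.card + 1) := by
  induction F using Finset.induction_on with
  | empty => exact ⟨∅, by simp, by simp, by simp, by simp⟩
  | @insert e F he ih =>
    obtain ⟨G, hUnion, hne, hdisj, hcard⟩ := ih
    classical
    set A : Finset (Finset β) :=
      G.filter (fun g => π0 e ∈ g.image π0 ∨ π1 e ∈ g.image π1) with hA
    have hAG : A ⊆ G := Finset.filter_subset _ _
    have hgsubF : ∀ g ∈ G, g ⊆ F := by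
      intro g hg x hx
      rw [← hUnion]
      exact Finset.mem_biUnion.mpr ⟨g, hg, hx⟩
    set gnew : Finset β := insert e (A.biUnion id) with hgnew
    have hAdisj : ∀ g ∈ A, ∀ g' ∈ A, g ≠ g' → Disjoint g g' :=
      fun g hg g' hg' hne' => (hdisj g (hAG hg) g' (hAG hg') hne').1
    have heA : e ∉ A.biUnion id := by
      intro h
      obtain ⟨g, hg, hx⟩ := Finset.mem_biUnion.mp h
      exact he (hgsubF g (hAG hg) hx)
    have hbicard : (A.biUnion id).card = ∑ g ∈ A, g.card :=
      Finset.card_biUnion hAdisj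
    have hgnewcard : gnew.card = (∑ g ∈ A, g.card) + 1 := by
      rw [hgnew, Finset.card_insert_of_notMem heA, hbicard]
    have him0 : gnew.image π0 = insert (π0 e) (A.biUnion fun a => a.image π0) := by
      rw [hgnew, Finset.image_insert]
      congr 1
      exact Finset.biUnion_image
    have him1 : gnew.image π1 = insert (π1 e) (A.biUnion fun a => a.image π1) := by
      rw [hgnew, Finset.image_insert]
      congr 1
      exact Finset.biUnion_image
    refine ⟨insert gnew (G \ A), ?_, ?_, ?_, ?_⟩
    · -- union
      rw [Finset.biUnion_insert]
      have h1 : A.biUnion id ∪ (G \ A).biUnion id = F := by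
        ext x
        simp only [Finset.mem_union, Finset.mem_biUnion, Finset.mem_sdiff, id_eq, ← hUnion]
        constructor
        · rintro (⟨g, hg, hx⟩ | ⟨g, ⟨hg, _⟩, hx⟩)
          · exact ⟨g, hAG hg, hx⟩
          · exact ⟨g, hg, hx⟩
        · rintro ⟨g, hg, hx⟩
          by_cases hgA : g ∈ A
          · exact Or.inl ⟨g, hgA, hx⟩
          · exact Or.inr ⟨g, ⟨hg, hgA⟩, hx⟩
      show gnew ∪ (G \ A).biUnion id = insert e F
      rw [hgnew, Finset.insert_union, h1]
    · -- nonempty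
      intro g hg
      rcases Finset.mem_insert.mp hg with rfl | hg
      · exact ⟨e, Finset.mem_insert_self _ _⟩
      · exact hne g (Finset.mem_sdiff.mp hg).1
    · -- pairwise disjointness
      have key : ∀ g' ∈ G \ A, Disjoint gnew g' ∧
          Disjoint (gnew.image π0) (g'.image π0) ∧ Disjoint (gnew.image π1) (g'.image π1) := by
        intro g' hg'
        obtain ⟨hg'G, hg'A⟩ := Finset.mem_sdiff.mp hg'
        have hne' : ∀ a ∈ A, a ≠ g' := fun a ha h => hg'A (h ▸ ha)
        have hclause : ¬ (π0 e ∈ g'.image π0 ∨ π1 e ∈ g'.image π1) := by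
          intro h; exact hg'A (Finset.mem_filter.mpr ⟨hg'G, h⟩)
        push_neg at hclause
        refine ⟨?_, ?_, ?_⟩
        · rw [hgnew, Finset.insert_eq, Finset.disjoint_union_left]
          constructor
          · simp only [Finset.disjoint_singleton_left]
            exact fun h => he (hgsubF g' hg'G h)
          · rw [Finset.disjoint_biUnion_left]
            exact fun a ha => (hdisj a (hAG ha) g' hg'G (hne' a ha)).1
        · rw [him0, Finset.insert_eq, Finset.disjoint_union_left]
          constructor
          · simpa using hclause.1
          · rw [Finset.disjoint_biUnion_left]
            exact fun a ha => (hdisj a (hAG ha) g' hg'G (hne' a ha)).2.1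
        · rw [him1, Finset.insert_eq, Finset.disjoint_union_left]
          constructor
          · simpa using hclause.2
          · rw [Finset.disjoint_biUnion_left]
            exact fun a ha => (hdisj a (hAG ha) g' hg'G (hne' a ha)).2.2
      intro g hg g' hg' hgg'
      rcases Finset.mem_insert.mp hg with rfl | hgold
      · rcases Finset.mem_insert.mp hg' with rfl | hg'old
        · exact absurd rfl hgg'
        · exact key g' hg'old
      · rcases Finset.mem_insert.mp hg' with rfl | hg'old
        · obtain ⟨k1, k2, k3⟩ := key g hgold
          exact ⟨k1.symm, k2.symm, k3.symm⟩
        · exact hdisj g (Finset.mem_sdiff.mp hgold).1 g' (Finset.mem_sdiff.mp hg'old).1 hgg'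
    · -- card bound
      intro g hg
      rcases Finset.mem_insert.mp hg with rfl | hgold
      swap
      · exact hcard g (Finset.mem_sdiff.mp hgold).1
      -- the hard case: g = gnew
      have hAcard : A.card ≤ 2 := by
        have h0 : (A.filter (fun g => π0 e ∈ g.image π0)).card ≤ 1 := by
          rw [Finset.card_le_one]
          intro a ha b hb
          simp only [Finset.mem_filter] at ha hb
          by_contra hab
          exact (Finset.disjoint_left.mp (hdisj a (hAG ha.1) b (hAG hb.1) hab).2.1) ha.2 hb.2
        have h1 : (A.filter (fun g => π1 e ∈ g.image π1)).card ≤ 1 := by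
          rw [Finset.card_le_one]
          intro a ha b hb
          simp only [Finset.mem_filter] at ha hb
          by_contra hab
          exact (Finset.disjoint_left.mp (hdisj a (hAG ha.1) b (hAG hb.1) hab).2.2) ha.2 hb.2
        have hsub : A ⊆ (A.filter (fun g => π0 e ∈ g.image π0)) ∪
            (A.filter (fun g => π1 e ∈ g.image π1)) := by
          intro a ha
          have := (Finset.mem_filter.mp (hA ▸ ha)).2
          rcases this with h | h
          · exact Finset.mem_union_left _ (Finset.mem_filter.mpr ⟨ha, h⟩)
          · exact Finset.mem_union_right _ (Finset.mem_filter.mpr ⟨ha, h⟩)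
        calc A.card ≤ _ := Finset.card_le_card hsub
          _ ≤ _ := Finset.card_union_le _ _
          _ ≤ 2 := by omega
      have hAc : A.card = 0 ∨ A.card = 1 ∨ A.card = 2 := by omega
      rcases hAc with hAc | hAc | hAc
      · -- A empty
        have hemp : A = ∅ := Finset.card_eq_zero.mp hAc
        rw [hemp] at him0 him1 hgnewcard
        simp only [Finset.biUnion_empty, Finset.sum_empty] at him0 him1 hgnewcard
        rw [him0, him1, hgnewcard]
        simp
      · -- A = {a}
        obtain ⟨a, ha⟩ := Finset.card_eq_one.mp hAc
        have haA : a ∈ A := ha ▸ Finset.mem_singleton_self a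
        have hclause := (Finset.mem_filter.mp (hA ▸ haA)).2
        have hcarda := hcard a (hAG haA)
        rw [ha] at him0 him1 hgnewcard
        simp only [Finset.singleton_biUnion, Finset.sum_singleton] at him0 him1 hgnewcard
        have h0 : (gnew.image π0).card ≤ (a.image π0).card + 1 := by
          rw [him0]; exact Finset.card_insert_le _ _
        have h1 : (gnew.image π1).card ≤ (a.image π1).card + 1 := by
          rw [him1]; exact Finset.card_insert_le _ _
        rcases hclause with h | h
        · have h0' : (gnew.image π0).card = (a.image π0).card := by
            rw [him0, Finset.insert_eq_self.mpr h]
          omega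
        · have h1' : (gnew.image π1).card = (a.image π1).card := by
            rw [him1, Finset.insert_eq_self.mpr h]
          omega
      · -- A = {a, b}
        obtain ⟨a, b, hab, hA2⟩ := Finset.card_eq_two.mp hAc
        have haA : a ∈ A := by rw [hA2]; simp
        have hbA : b ∈ A := by rw [hA2]; simp
        have hca := (Finset.mem_filter.mp (hA ▸ haA)).2
        have hcb := (Finset.mem_filter.mp (hA ▸ hbA)).2
        have hcarda := hcard a (hAG haA)
        have hcardb := hcard b (hAG hbA)
        have hdab := hdisj a (hAG haA) b (hAG hbA) hab
        rw [hA2] at him0 him1 hgnewcard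
        rw [Finset.biUnion_insert, Finset.singleton_biUnion] at him0 him1
        rw [Finset.sum_insert (by simpa using hab), Finset.sum_singleton] at hgnewcard
        have key : ∀ (s : Finset γ), π0 e ∈ s → s = a.image π0 ∪ b.image π0 →
            (gnew.image π0).card ≤ (a.image π0).card + (b.image π0).card := by
          intro s hs hse
          rw [him0, ← hse, Finset.insert_eq_self.mpr hs, hse]
          exact Finset.card_union_le _ _
        have key1 : ∀ (s : Finset γ), π1 e ∈ s → s = a.image π1 ∪ b.image π1 →
            (gnew.image π1).card ≤ (a.image π1).card + (b.image π1).card := by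
          intro s hs hse
          rw [him1, ← hse, Finset.insert_eq_self.mpr hs, hse]
          exact Finset.card_union_le _ _
        rcases hca with h | h <;> rcases hcb with h' | h'
        · exact absurd h' (Finset.disjoint_left.mp hdab.2.1 h)
        · have k0 := key _ (Finset.mem_union_left _ h) rfl
          have k1 := key1 _ (Finset.mem_union_right _ h') rfl
          omega
        · have k0 := key _ (Finset.mem_union_right _ h') rfl
          have k1 := key1 _ (Finset.mem_union_left _ h) rfl
          omega
        · exact absurd h' (Finset.disjoint_left.mp hdab.2.2 h)


lemma lemA {V : Type*} [Fintype V] [DecidableEq V] {r : ℕ} (hr : 2 ≤ r)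
    (P : Fin r → Finset V) (E' : Finset (Finset V)) (N : ℕ)
    (hPcard : ∀ i, (P i).card = N)
    (hPdisj : ∀ i j, i ≠ j → Disjoint (P i) (P j))
    (hE : ∀ e ∈ E', ∀ i, (e ∩ P i).card = 1)
    (hlt : E'.card < N) :
    ∃ t B, (∀ i, (B ∩ P i).card = t) ∧ B ⊆ Finset.univ.biUnion P ∧
      ∀ e ∈ E', (e ∩ B).Nonempty ∧ (e \ B).Nonempty := by
  classical
  rcases Finset.eq_empty_or_nonempty E' with rfl | ⟨e₀, he₀⟩
  · exact ⟨0, ∅, by simp, by simp, by simp⟩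
  set i0 : Fin r := ⟨0, by omega⟩ with hi0
  set i1 : Fin r := ⟨1, by omega⟩ with hi1
  have h01 : i0 ≠ i1 := by simp [hi0, hi1, Fin.ext_iff]
  have hv0 : (e₀ ∩ P i0).Nonempty := by
    rw [← Finset.card_pos, hE e₀ he₀ i0]; omega
  obtain ⟨v₀, -⟩ := hv0
  -- projections
  set π0 : Finset V → V := fun e => if h : (e ∩ P i0).Nonempty then h.choose else v₀ with hπ0
  set π1 : Finset V → V := fun e => if h : (e ∩ P i1).Nonempty then h.choose else v₀ with hπ1
  have hπ0mem : ∀ e ∈ E', π0 e ∈ e ∧ π0 e ∈ P i0 := by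
    intro e he
    have h : (e ∩ P i0).Nonempty := by rw [← Finset.card_pos, hE e he i0]; omega
    have := h.choose_spec
    rw [Finset.mem_inter] at this
    simpa [hπ0, dif_pos h] using this
  have hπ1mem : ∀ e ∈ E', π1 e ∈ e ∧ π1 e ∈ P i1 := by
    intro e he
    have h : (e ∩ P i1).Nonempty := by rw [← Finset.card_pos, hE e he i1]; omega
    have := h.choose_spec
    rw [Finset.mem_inter] at this
    simpa [hπ1, dif_pos h] using this
  obtain ⟨G, hUnion, hGne, hGdisj, hGcard⟩ := grouping π0 π1 E'
  have hgsub : ∀ g ∈ G, g ⊆ E' := by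
    intro g hg x hx
    rw [← hUnion]; exact Finset.mem_biUnion.mpr ⟨g, hg, hx⟩
  set m := E'.card with hm
  set k := G.card with hk
  have hGnonempty : G.Nonempty := by
    rw [← hUnion] at he₀
    obtain ⟨g, hg, -⟩ := Finset.mem_biUnion.mp he₀
    exact ⟨g, hg⟩
  have hk1 : 1 ≤ k := Finset.card_pos.mpr hGnonempty
  have hsumcard : ∑ g ∈ G, g.card = m := by
    rw [hm, ← hUnion]
    exact (Finset.card_biUnion (fun g hg g' hg' hne => (hGdisj g hg g' hg' hne).1)).symm
  have hkm : k ≤ m := by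
    calc k = ∑ _g ∈ G, 1 := by rw [hk, Finset.card_eq_sum_ones]
    _ ≤ ∑ g ∈ G, g.card := Finset.sum_le_sum (fun g hg => (hGne g hg).card_pos)
    _ = m := hsumcard
  set c : Finset (Finset V) → ℕ := fun g => (g.image π0).card + (g.image π1).card with hc
  set M := m + 2 - k with hM
  have hcM : ∀ g ∈ G, c g ≤ M := by
    intro g hg
    have h1 : c g ≤ g.card + 1 := hGcard g hg
    have h2 : g.card + (k - 1) ≤ m := by
      have : ∑ g' ∈ G.erase g, g'.card ≥ (G.erase g).card := by
        calc (G.erase g).card = ∑ _g ∈ G.erase g, 1 := Finset.card_eq_sum_ones _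
        _ ≤ _ := Finset.sum_le_sum (fun g' hg' => (hGne g' (Finset.mem_of_mem_erase hg')).card_pos)
      have herase : (G.erase g).card = k - 1 := by rw [hk, Finset.card_erase_of_mem hg]
      have hsplit : g.card + ∑ g' ∈ G.erase g, g'.card = m := by
        rw [← hsumcard, Finset.add_sum_erase _ _ hg]
      omega
    omega
  have hsumc : ∑ g ∈ G, c g ≤ m + k := by
    calc ∑ g ∈ G, c g ≤ ∑ g ∈ G, (g.card + 1) := Finset.sum_le_sum (fun g hg => hGcard g hg)
    _ = m + k := by rw [Finset.sum_add_distrib, hsumcard, Finset.sum_const, smul_eq_mul, mul_one]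
  -- find the split S
  have hSexists : ∃ S, S ⊆ G ∧ ∑ g ∈ S, c g ≤ N ∧ ∑ g ∈ G \ S, c g ≤ N := by
    by_cases hbig : ∑ g ∈ G, c g ≤ N
    · exact ⟨G, Finset.Subset.refl _, hbig, by simp⟩
    · push_neg at hbig
      obtain ⟨S, hSG, h1, h2⟩ := window c M (by omega) G ((∑ g ∈ G, c g) - N) hcM (by omega)
      refine ⟨S, hSG, by omega, ?_⟩
      have := Finset.sum_sdiff (f := c) hSG
      omega
  obtain ⟨S, hSG, hS1, hS2⟩ := hSexists
  -- the X/Y quantities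
  set inX := ∑ g ∈ S, (g.image π0).card with hinX
  set outY := ∑ g ∈ S, (g.image π1).card with houtY
  set outX := ∑ g ∈ G \ S, (g.image π0).card with houtX
  set inY := ∑ g ∈ G \ S, (g.image π1).card with hinY
  have hin_outX : inX + outX ≤ N := by
    have hdX : ∀ g ∈ G, ∀ g' ∈ G, g ≠ g' → Disjoint (g.image π0) (g'.image π0) :=
      fun g hg g' hg' hne => (hGdisj g hg g' hg' hne).2.1
    have : (G.biUnion fun g => g.image π0).card = ∑ g ∈ G, (g.image π0).card :=
      Finset.card_biUnion (fun g hg g' hg' hne => hdX g hg g' hg' hne)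
    have hsub : (G.biUnion fun g => g.image π0) ⊆ P i0 := by
      intro x hx
      obtain ⟨g, hg, hx⟩ := Finset.mem_biUnion.mp hx
      obtain ⟨e, he, rfl⟩ := Finset.mem_image.mp hx
      exact (hπ0mem e (hgsub g hg he)).2
    have hle := Finset.card_le_card hsub
    rw [this, hPcard] at hle
    rw [hinX, houtX, ← Finset.sum_sdiff hSG] at *
    omega
  have hin_outY : inY + outY ≤ N := by
    have : (G.biUnion fun g => g.image π1).card = ∑ g ∈ G, (g.image π1).card :=
      Finset.card_biUnion (fun g hg g' hg' hne => (hGdisj g hg g' hg' hne).2.2)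
    have hsub : (G.biUnion fun g => g.image π1) ⊆ P i1 := by
      intro x hx
      obtain ⟨g, hg, hx⟩ := Finset.mem_biUnion.mp hx
      obtain ⟨e, he, rfl⟩ := Finset.mem_image.mp hx
      exact (hπ1mem e (hgsub g hg he)).2
    have hle := Finset.card_le_card hsub
    rw [this, hPcard] at hle
    rw [hinY, houtY, ← Finset.sum_sdiff hSG] at *
    omega
  have hcross1 : inX + outY ≤ N := by
    have : inX + outY = ∑ g ∈ S, c g := by
      rw [hinX, houtY, hc, ← Finset.sum_add_distrib]
    omega
  have hcross2 : inY + outX ≤ N := by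
    have : inY + outX = ∑ g ∈ G \ S, c g := by
      rw [hinY, houtX, hc, ← Finset.sum_add_distrib]
      exact Finset.sum_congr rfl (fun g _ => add_comm _ _)
    omega
  set t := max inX inY with ht
  have htN : t ≤ N := by omega
  -- build BX
  have hXdisjoint : Disjoint (S.biUnion fun g => g.image π0) ((G \ S).biUnion fun g => g.image π0) := by
    rw [Finset.disjoint_biUnion_left]
    intro g hg
    rw [Finset.disjoint_biUnion_right]
    intro g' hg'
    have hne : g ≠ g' := by
      rintro rfl
      exact (Finset.mem_sdiff.mp hg').2 hg
    exact (hGdisj g (hSG hg) g' (Finset.mem_sdiff.mp hg').1 hne).2.1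
  have hScard : (S.biUnion fun g => g.image π0).card = inX :=
    Finset.card_biUnion (fun g hg g' hg' hne =>
      (hGdisj g (hSG hg) g' (hSG hg') hne).2.1)
  have hGScard : ((G \ S).biUnion fun g => g.image π0).card = outX :=
    Finset.card_biUnion (fun g hg g' hg' hne =>
      (hGdisj g (Finset.mem_sdiff.mp hg).1 g' (Finset.mem_sdiff.mp hg').1 hne).2.1)
  have hSsubX : (S.biUnion fun g => g.image π0) ⊆ P i0 := by
    intro x hx
    obtain ⟨g, hg, hx⟩ := Finset.mem_biUnion.mp hx
    obtain ⟨e, he, rfl⟩ := Finset.mem_image.mp hx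
    exact (hπ0mem e (hgsub g (hSG hg) he)).2
  have hGSsubX : ((G \ S).biUnion fun g => g.image π0) ⊆ P i0 := by
    intro x hx
    obtain ⟨g, hg, hx⟩ := Finset.mem_biUnion.mp hx
    obtain ⟨e, he, rfl⟩ := Finset.mem_image.mp hx
    exact (hπ0mem e (hgsub g (Finset.mem_sdiff.mp hg).1 he)).2
  obtain ⟨BX, hBX1, hBX2, hBX3⟩ := Finset.exists_subsuperset_card_eq
    (s := S.biUnion fun g => g.image π0)
    (t := P i0 \ ((G \ S).biUnion fun g => g.image π0)) (n := t)
    (Finset.subset_sdiff.mpr ⟨hSsubX, hXdisjoint⟩)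
    (by rw [hScard]; omega)
    (by rw [Finset.card_sdiff_of_subset hGSsubX, hGScard, hPcard]; omega)
  -- build BY
  have hYdisjoint : Disjoint ((G \ S).biUnion fun g => g.image π1) (S.biUnion fun g => g.image π1) := by
    rw [Finset.disjoint_biUnion_left]
    intro g hg
    rw [Finset.disjoint_biUnion_right]
    intro g' hg'
    have hne : g ≠ g' := by
      rintro rfl
      exact (Finset.mem_sdiff.mp hg).2 hg'
    exact (hGdisj g (Finset.mem_sdiff.mp hg).1 g' (hSG hg') hne).2.2
  have hScard1 : (S.biUnion fun g => g.image π1).card = outY :=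
    Finset.card_biUnion (fun g hg g' hg' hne =>
      (hGdisj g (hSG hg) g' (hSG hg') hne).2.2)
  have hGScard1 : ((G \ S).biUnion fun g => g.image π1).card = inY :=
    Finset.card_biUnion (fun g hg g' hg' hne =>
      (hGdisj g (Finset.mem_sdiff.mp hg).1 g' (Finset.mem_sdiff.mp hg').1 hne).2.2)
  have hSsubY : (S.biUnion fun g => g.image π1) ⊆ P i1 := by
    intro x hx
    obtain ⟨g, hg, hx⟩ := Finset.mem_biUnion.mp hx
    obtain ⟨e, he, rfl⟩ := Finset.mem_image.mp hx
    exact (hπ1mem e (hgsub g (hSG hg) he)).2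
  have hGSsubY : ((G \ S).biUnion fun g => g.image π1) ⊆ P i1 := by
    intro x hx
    obtain ⟨g, hg, hx⟩ := Finset.mem_biUnion.mp hx
    obtain ⟨e, he, rfl⟩ := Finset.mem_image.mp hx
    exact (hπ1mem e (hgsub g (Finset.mem_sdiff.mp hg).1 he)).2
  obtain ⟨BY, hBY1, hBY2, hBY3⟩ := Finset.exists_subsuperset_card_eq
    (s := (G \ S).biUnion fun g => g.image π1)
    (t := P i1 \ (S.biUnion fun g => g.image π1)) (n := t)
    (Finset.subset_sdiff.mpr ⟨hGSsubY, hYdisjoint⟩)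
    (by rw [hGScard1]; omega)
    (by rw [Finset.card_sdiff_of_subset hSsubY, hScard1, hPcard]; omega)
  -- the other parts
  have hother : ∀ i : Fin r, ∃ Bi, Bi ⊆ P i ∧ Bi.card = t := by
    intro i
    obtain ⟨Bi, h1, h2⟩ := Finset.exists_subset_card_eq (s := P i) (n := t) (by rw [hPcard]; omega)
    exact ⟨Bi, h1, h2⟩
  set Bfun : Fin r → Finset V := fun i =>
    if i = i0 then BX else if i = i1 then BY else (hother i).choose with hBfun
  have hBfunspec : ∀ i, Bfun i ⊆ P i ∧ (Bfun i).card = t := by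
    intro i
    rw [hBfun]
    by_cases h0 : i = i0
    · subst h0
      simp only [if_pos rfl]
      exact ⟨fun x hx => (Finset.mem_sdiff.mp (hBX2 hx)).1, hBX3⟩
    by_cases h1 : i = i1
    · subst h1
      simp only [if_neg h0, if_pos rfl]
      exact ⟨fun x hx => (Finset.mem_sdiff.mp (hBY2 hx)).1, hBY3⟩
    · simp only [if_neg h0, if_neg h1]
      exact (hother i).choose_spec
  set B := Finset.univ.biUnion Bfun with hB
  have hBinter : ∀ i, B ∩ P i = Bfun i := by
    intro i
    apply Finset.Subset.antisymm
    · intro x hx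
      obtain ⟨hxB, hxP⟩ := Finset.mem_inter.mp hx
      obtain ⟨j, -, hj⟩ := Finset.mem_biUnion.mp hxB
      by_cases hij : j = i
      · exact hij ▸ hj
      · exact absurd hxP (Finset.disjoint_left.mp (hPdisj j i hij) ((hBfunspec j).1 hj))
    · intro x hx
      exact Finset.mem_inter.mpr ⟨Finset.mem_biUnion.mpr ⟨i, Finset.mem_univ i, hx⟩,
        (hBfunspec i).1 hx⟩
  have hBnotmem : ∀ x ∈ P i0, x ∉ BX → x ∉ B := by
    intro x hxP hxBX hxB
    obtain ⟨j, -, hj⟩ := Finset.mem_biUnion.mp hxB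
    by_cases hij : j = i0
    · subst hij
      rw [hBfun] at hj
      simp only [if_pos rfl] at hj
      exact hxBX hj
    · exact Finset.disjoint_left.mp (hPdisj j i0 hij) ((hBfunspec j).1 hj) hxP
  have hBnotmemY : ∀ x ∈ P i1, x ∉ BY → x ∉ B := by
    intro x hxP hxBY hxB
    obtain ⟨j, -, hj⟩ := Finset.mem_biUnion.mp hxB
    by_cases hij : j = i1
    · subst hij
      rw [hBfun] at hj
      simp only [if_neg h01.symm, if_pos rfl] at hj
      exact hxBY hj
    · exact Finset.disjoint_left.mp (hPdisj j i1 hij) ((hBfunspec j).1 hj) hxP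
  refine ⟨t, B, ?_, ?_, ?_⟩
  · intro i
    rw [hBinter i]
    exact (hBfunspec i).2
  · intro x hx
    obtain ⟨j, -, hj⟩ := Finset.mem_biUnion.mp hx
    exact Finset.mem_biUnion.mpr ⟨j, Finset.mem_univ j, (hBfunspec j).1 hj⟩
  · intro e he
    obtain ⟨g, hg, hge⟩ := Finset.mem_biUnion.mp (hUnion ▸ he)
    by_cases hgS : g ∈ S
    · constructor
      · refine ⟨π0 e, Finset.mem_inter.mpr ⟨(hπ0mem e he).1, ?_⟩⟩
        have : π0 e ∈ S.biUnion fun g => g.image π0 :=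
          Finset.mem_biUnion.mpr ⟨g, hgS, Finset.mem_image_of_mem _ hge⟩
        have hmem : π0 e ∈ BX := hBX1 this
        exact Finset.mem_biUnion.mpr ⟨i0, Finset.mem_univ i0, by
          rw [hBfun]; simp only [if_pos rfl]; exact hmem⟩
      · refine ⟨π1 e, Finset.mem_sdiff.mpr ⟨(hπ1mem e he).1, ?_⟩⟩
        apply hBnotmemY (π1 e) (hπ1mem e he).2
        intro hmem
        have := Finset.mem_sdiff.mp (hBY2 hmem)
        exact this.2 (Finset.mem_biUnion.mpr ⟨g, hgS, Finset.mem_image_of_mem _ hge⟩)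
    · have hgGS : g ∈ G \ S := Finset.mem_sdiff.mpr ⟨hg, hgS⟩
      constructor
      · refine ⟨π1 e, Finset.mem_inter.mpr ⟨(hπ1mem e he).1, ?_⟩⟩
        have : π1 e ∈ (G \ S).biUnion fun g => g.image π1 :=
          Finset.mem_biUnion.mpr ⟨g, hgGS, Finset.mem_image_of_mem _ hge⟩
        have hmem : π1 e ∈ BY := hBY1 this
        exact Finset.mem_biUnion.mpr ⟨i1, Finset.mem_univ i1, by
          rw [hBfun]; simp only [if_neg h01.symm, if_pos rfl]; exact hmem⟩
      · refine ⟨π0 e, Finset.mem_sdiff.mpr ⟨(hπ0mem e he).1, ?_⟩⟩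
        apply hBnotmem (π0 e) (hπ0mem e he).2
        intro hmem
        have := Finset.mem_sdiff.mp (hBX2 hmem)
        exact this.2 (Finset.mem_biUnion.mpr ⟨g, hgGS, Finset.mem_image_of_mem _ hge⟩)


-- number of k-subsets of u containing a fixed element
lemma card_powersetCard_mem {α : Type*} [DecidableEq α] (u : Finset α) (c : α) (hc : c ∈ u)
    (k : ℕ) (hk : 1 ≤ k) :
    ((Finset.powersetCard k u).filter (fun S => c ∈ S)).card
      = Nat.choose (u.card - 1) (k - 1) := by
  classical
  rw [show u.card - 1 = (u.erase c).card from (Finset.card_erase_of_mem hc).symm,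
    ← Finset.card_powersetCard (k-1) (u.erase c)]
  apply Finset.card_bij (fun S _ => S.erase c)
  · intro S hS
    rw [Finset.mem_filter, Finset.mem_powersetCard] at hS
    rw [Finset.mem_powersetCard]
    exact ⟨Finset.erase_subset_erase c hS.1.1,
      by rw [Finset.card_erase_of_mem hS.2, hS.1.2]⟩
  · intro S hS S' hS' h
    rw [Finset.mem_filter] at hS hS'
    have : insert c (S.erase c) = insert c (S'.erase c) := by rw [h]
    rwa [Finset.insert_erase hS.2, Finset.insert_erase hS'.2] at this
  · intro T hT
    rw [Finset.mem_powersetCard] at hT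
    have hcT : c ∉ T := fun h => (Finset.mem_erase.mp (hT.1 h)).1 rfl
    refine ⟨insert c T, ?_, ?_⟩
    · rw [Finset.mem_filter, Finset.mem_powersetCard]
      refine ⟨⟨Finset.insert_subset hc (hT.1.trans (Finset.erase_subset c u)), ?_⟩,
        Finset.mem_insert_self c T⟩
      rw [Finset.card_insert_of_notMem hcT, hT.2]
      omega
    · rw [Finset.erase_insert hcT]

-- the choose identity
lemma chooseId (a b : ℕ) (ha : 2 ≤ a) (hb : 2 ≤ b) :
    (a - 1) * Nat.choose (a - 2) (b - 2) = (b - 1) * Nat.choose (a - 1) (b - 1) := by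
  obtain ⟨a', rfl⟩ : ∃ a', a = a' + 2 := ⟨a - 2, by omega⟩
  obtain ⟨b', rfl⟩ : ∃ b', b = b' + 2 := ⟨b - 2, by omega⟩
  show (a' + 1) * Nat.choose a' b' = (b' + 1) * Nat.choose (a' + 1) (b' + 1)
  exact (Nat.add_one_mul_choose_eq a' b').trans (mul_comm _ _)

-- sum over k-subsets of the sums of a function
lemma sum_powersetCard_sum {α : Type*} [DecidableEq α] [Fintype α] (k : ℕ) (hk : 1 ≤ k)
    (a : α → ℕ) :
    ∑ S ∈ Finset.powersetCard k (Finset.univ : Finset α), ∑ c ∈ S, a c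
      = (∑ c, a c) * Nat.choose (Fintype.card α - 1) (k - 1) := by
  classical
  have h1 : ∀ S ∈ Finset.powersetCard k (Finset.univ : Finset α),
      ∑ c ∈ S, a c = ∑ c ∈ Finset.univ, if c ∈ S then a c else 0 := by
    intro S hS
    rw [Finset.sum_ite_mem, Finset.univ_inter]
  rw [Finset.sum_congr rfl h1, Finset.sum_comm]
  have h2 : ∀ c : α, ∑ S ∈ Finset.powersetCard k (Finset.univ : Finset α),
      (if c ∈ S then a c else 0)
      = a c * Nat.choose (Fintype.card α - 1) (k - 1) := by
    intro c
    rw [Finset.sum_ite, Finset.sum_const, Finset.sum_const, smul_eq_mul, smul_eq_mul,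
      mul_zero, add_zero, card_powersetCard_mem Finset.univ c (Finset.mem_univ c) k hk,
      Finset.card_univ, mul_comm]
  rw [Finset.sum_congr rfl (fun c _ => h2 c), ← Finset.sum_mul]


def HasBalancedColoring {V : Type*} [Fintype V] [DecidableEq V] {r : ℕ}
    (parts : Fin r → Finset V) (E : Finset (Finset V)) (q : ℕ) : Prop :=
  ∃ φ : V → Fin q, ∀ c : Fin q,
    (∀ e ∈ E, ¬ e ⊆ Finset.univ.filter (fun v => φ v = c)) ∧
    (∀ i j, ((Finset.univ.filter (fun v => φ v = c)) ∩ parts i).card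
          = ((Finset.univ.filter (fun v => φ v = c)) ∩ parts j).card)

lemma keyRecolor {V : Type*} [Fintype V] [DecidableEq V] {r q : ℕ} (hr : 2 ≤ r)
    (parts : Fin r → Finset V) (E : Finset (Finset V))
    (hdisj : ∀ i j, i ≠ j → Disjoint (parts i) (parts j))
    (hedge : ∀ e ∈ E, ∀ i, (e ∩ parts i).card = 1)
    (hq3 : 3 ≤ q)
    (φ : V → Fin q)
    (hφprop : ∀ c : Fin q, ∀ e ∈ E, ¬ e ⊆ Finset.univ.filter (fun v => φ v = c))
    (hφbal : ∀ c : Fin q, ∀ i j, ((Finset.univ.filter (fun v => φ v = c)) ∩ parts i).card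
          = ((Finset.univ.filter (fun v => φ v = c)) ∩ parts j).card)
    (i0 : Fin r)
    (S : Finset (Fin q)) (hS3 : 3 ≤ S.card)
    (hfew : (E.filter fun e => ∀ v ∈ e, φ v ∈ S).card
        < ∑ cc ∈ S, ((Finset.univ.filter (fun v => φ v = cc)) ∩ parts i0).card) :
    HasBalancedColoring parts E (q - 1) := by
  classical
  set W : Finset V := Finset.univ.filter (fun v => φ v ∈ S) with hW
  set P : Fin r → Finset V := fun i => parts i ∩ W with hP
  set N : ℕ := ∑ cc ∈ S, ((Finset.univ.filter (fun v => φ v = cc)) ∩ parts i0).card with hN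
  have hclassdisj : ∀ (i : Fin r), ∀ cc ∈ S, ∀ cc' ∈ S, cc ≠ cc' →
      Disjoint ((Finset.univ.filter (fun v => φ v = cc)) ∩ parts i)
        ((Finset.univ.filter (fun v => φ v = cc')) ∩ parts i) := by
    intro i cc _ cc' _ hne
    rw [Finset.disjoint_left]
    intro x hx hx'
    rw [Finset.mem_inter, Finset.mem_filter] at hx hx'
    exact hne (hx.1.2 ▸ hx'.1.2 ▸ rfl)
  have hPeq : ∀ i : Fin r, P i = S.biUnion
      (fun cc => (Finset.univ.filter (fun v => φ v = cc)) ∩ parts i) := by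
    intro i
    ext v
    simp only [hP, hW, Finset.mem_inter, Finset.mem_filter, Finset.mem_biUnion, Finset.mem_univ,
      true_and]
    constructor
    · rintro ⟨hv, hvS⟩; exact ⟨φ v, hvS, rfl, hv⟩
    · rintro ⟨cc, hcc, hvc, hv⟩; exact ⟨hv, hvc ▸ hcc⟩
  have hPcard : ∀ i, (P i).card = N := by
    intro i
    rw [hPeq i, Finset.card_biUnion (hclassdisj i), hN]
    exact Finset.sum_congr rfl (fun cc _ => hφbal cc i i0)
  have hPdisj : ∀ i j, i ≠ j → Disjoint (P i) (P j) := by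
    intro i j hij
    exact Finset.disjoint_of_subset_left Finset.inter_subset_left
      (Finset.disjoint_of_subset_right Finset.inter_subset_left (hdisj i j hij))
  set E' : Finset (Finset V) := E.filter (fun e => ∀ v ∈ e, φ v ∈ S) with hE'
  have hE'sub : ∀ e ∈ E', e ∈ E ∧ ∀ v ∈ e, φ v ∈ S := fun e he => Finset.mem_filter.mp he
  have hE'edge : ∀ e ∈ E', ∀ i, (e ∩ P i).card = 1 := by
    intro e he i
    have heW : e ∩ P i = e ∩ parts i := by
      ext x
      simp only [hP, hW, Finset.mem_inter, Finset.mem_filter, Finset.mem_univ, true_and]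
      constructor
      · rintro ⟨h1, h2, _⟩; exact ⟨h1, h2⟩
      · rintro ⟨h1, h2⟩; exact ⟨h1, h2, (hE'sub e he).2 x h1⟩
    rw [heW]
    exact hedge e (hE'sub e he).1 i
  obtain ⟨t, B, hBcard, hBsub, hBedge⟩ := lemA hr P E' N hPcard hPdisj hE'edge hfew
  have hBW : B ⊆ W := by
    intro x hx
    obtain ⟨j, -, hj⟩ := Finset.mem_biUnion.mp (hBsub hx)
    exact Finset.inter_subset_right (hP ▸ hj)
  have hWB : ∀ v ∈ B, φ v ∈ S := fun v hv => (Finset.mem_filter.mp (hBW hv)).2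
  -- pick three distinct colors in S
  obtain ⟨c1, hc1⟩ := Finset.card_pos.mp (by omega : 0 < S.card)
  obtain ⟨c2, hc2⟩ := Finset.card_pos.mp
    (by rw [Finset.card_erase_of_mem hc1]; omega : 0 < (S.erase c1).card)
  obtain ⟨c3, hc3⟩ := Finset.card_pos.mp
    (by rw [Finset.card_erase_of_mem hc2, Finset.card_erase_of_mem hc1]; omega :
      0 < ((S.erase c1).erase c2).card)
  obtain ⟨hc21, hc2S⟩ := Finset.mem_erase.mp hc2
  obtain ⟨hc32, hc3'⟩ := Finset.mem_erase.mp hc3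
  obtain ⟨hc31, hc3S⟩ := Finset.mem_erase.mp hc3'
  -- the recoloring within Fin q
  set ψ : V → Fin q := fun v => if φ v ∈ S then (if v ∈ B then c1 else c2) else φ v with hψ
  have hψ3 : ∀ v, ψ v ≠ c3 := by
    intro v
    simp only [hψ]
    split_ifs with h1 h2
    · exact fun h => hc31 h.symm
    · exact fun h => hc32 h.symm
    · exact fun h => h1 (h ▸ hc3S)
  have hcl1 : Finset.univ.filter (fun v => ψ v = c1) = B := by
    ext v
    simp only [Finset.mem_filter, Finset.mem_univ, true_and, hψ]
    split_ifs with h1 h2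
    · simp [h2]
    · simp only [h2, iff_false]
      exact fun h => hc21 h
    · constructor
      · exact fun h => absurd (h ▸ hc1) h1
      · exact fun h => absurd (hWB v h) h1
  have hcl2 : Finset.univ.filter (fun v => ψ v = c2) = W \ B := by
    ext v
    simp only [Finset.mem_filter, Finset.mem_univ, true_and, hψ, Finset.mem_sdiff]
    by_cases h1 : φ v ∈ S
    · by_cases h2 : v ∈ B
      · rw [if_pos h1, if_pos h2]
        constructor
        · intro h; exact absurd h.symm hc21
        · rintro ⟨-, hvB⟩; exact absurd h2 hvB
      · rw [if_pos h1, if_neg h2]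
        have hvW : v ∈ W := by rw [hW]; exact Finset.mem_filter.mpr ⟨Finset.mem_univ v, h1⟩
        constructor
        · exact fun _ => ⟨hvW, h2⟩
        · exact fun _ => rfl
    · rw [if_neg h1]
      have hvW : v ∉ W := by rw [hW]; simp [h1]
      constructor
      · exact fun h => absurd (h ▸ hc2S) h1
      · rintro ⟨h, -⟩; exact absurd h hvW
  have hcl3 : ∀ cc ∈ S, cc ≠ c1 → cc ≠ c2 → Finset.univ.filter (fun v => ψ v = cc) = ∅ := by
    intro cc hccS hne1 hne2
    ext v
    simp only [Finset.mem_filter, Finset.mem_univ, true_and, hψ, Finset.notMem_empty,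
      iff_false]
    split_ifs with h1 h2
    · exact fun h => hne1 h.symm
    · exact fun h => hne2 h.symm
    · exact fun h => h1 (h ▸ hccS)
  have hcl4 : ∀ cc : Fin q, cc ∉ S →
      Finset.univ.filter (fun v => ψ v = cc) = Finset.univ.filter (fun v => φ v = cc) := by
    intro cc hccS
    ext v
    simp only [Finset.mem_filter, Finset.mem_univ, true_and, hψ]
    split_ifs with h1 h2
    · constructor
      · exact fun h => absurd (h ▸ hc1) hccS
      · exact fun h => absurd (h ▸ h1) hccS
    · constructor
      · exact fun h => absurd (h ▸ hc2S) hccS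
      · exact fun h => absurd (h ▸ h1) hccS
    · exact Iff.rfl
  have henon : ∀ e ∈ E, e.Nonempty := by
    intro e he
    have := hedge e he i0
    have h : (e ∩ parts i0).Nonempty := by rw [← Finset.card_pos, this]; omega
    obtain ⟨x, hx⟩ := h
    exact ⟨x, (Finset.mem_inter.mp hx).1⟩
  -- key properties of ψ classes
  have hψgood : ∀ cc : Fin q,
      (∀ e ∈ E, ¬ e ⊆ Finset.univ.filter (fun v => ψ v = cc)) ∧
      (∀ i j, ((Finset.univ.filter (fun v => ψ v = cc)) ∩ parts i).card
            = ((Finset.univ.filter (fun v => ψ v = cc)) ∩ parts j).card) := by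
    intro cc
    by_cases h1 : cc = c1
    · subst h1
      rw [hcl1]
      constructor
      · intro e he hsub
        have heE' : e ∈ E' := Finset.mem_filter.mpr ⟨he, fun v hv => hWB v (hsub hv)⟩
        obtain ⟨x, hx⟩ := (hBedge e heE').2
        rw [Finset.mem_sdiff] at hx
        exact hx.2 (hsub hx.1)
      · intro i j
        have hBp : ∀ i : Fin r, B ∩ parts i = B ∩ P i := by
          intro i
          ext x
          simp only [hP, Finset.mem_inter]
          constructor
          · rintro ⟨h1, h2⟩; exact ⟨h1, h2, hBW h1⟩
          · rintro ⟨h1, h2, -⟩; exact ⟨h1, h2⟩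
        rw [hBp i, hBp j, hBcard i, hBcard j]
    by_cases h2 : cc = c2
    · subst h2
      rw [hcl2]
      constructor
      · intro e he hsub
        have heW : ∀ v ∈ e, φ v ∈ S := by
          intro v hv
          have := hsub hv
          rw [Finset.mem_sdiff, hW, Finset.mem_filter] at this
          exact this.1.2
        have heE' : e ∈ E' := Finset.mem_filter.mpr ⟨he, heW⟩
        obtain ⟨x, hx⟩ := (hBedge e heE').1
        rw [Finset.mem_inter] at hx
        have := hsub hx.1
        rw [Finset.mem_sdiff] at this
        exact this.2 hx.2
      · intro i j
        have hWBp : ∀ i : Fin r, (W \ B) ∩ parts i = P i \ B := by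
          intro i
          ext x
          simp only [hP, Finset.mem_sdiff, Finset.mem_inter]
          tauto
        have hcardp : ∀ i : Fin r, (P i \ B).card = N - t := by
          intro i
          have h1 := Finset.card_sdiff_add_card_inter (P i) B
          have h2 : P i ∩ B = B ∩ P i := Finset.inter_comm _ _
          rw [h2, hBcard i, hPcard i] at h1
          omega
        rw [hWBp i, hWBp j, hcardp i, hcardp j]
    by_cases h3 : cc ∈ S
    · rw [hcl3 cc h3 h1 h2]
      constructor
      · intro e he hsub
        obtain ⟨x, hx⟩ := henon e he
        exact absurd (hsub hx) (Finset.notMem_empty x)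
      · intro i j; simp
    · rw [hcl4 cc h3]
      exact ⟨hφprop cc, hφbal cc⟩
  -- convert to Fin (q-1)
  have hc3lt : (c3 : ℕ) < q := c3.isLt
  refine ⟨fun v => if h : (ψ v : ℕ) < (c3 : ℕ) then ⟨(ψ v : ℕ), by omega⟩
    else ⟨(ψ v : ℕ) - 1, by have := (ψ v).isLt; omega⟩, ?_⟩
  intro d
  set cd : Fin q := if (d : ℕ) < (c3 : ℕ) then ⟨(d : ℕ), by have := d.isLt; omega⟩
    else ⟨(d : ℕ) + 1, by have := d.isLt; omega⟩ with hcd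
  have hclassd : (Finset.univ.filter (fun v =>
      (if h : (ψ v : ℕ) < (c3 : ℕ) then (⟨(ψ v : ℕ), by omega⟩ : Fin (q-1))
        else ⟨(ψ v : ℕ) - 1, by have := (ψ v).isLt; omega⟩) = d))
      = Finset.univ.filter (fun v => ψ v = cd) := by
    ext v
    simp only [Finset.mem_filter, Finset.mem_univ, true_and]
    have hne3 : ψ v ≠ c3 := hψ3 v
    have hne3' : (ψ v : ℕ) ≠ (c3 : ℕ) := fun h => hne3 (Fin.ext h)
    have hdlt : (d : ℕ) < q - 1 := d.isLt
    constructor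
    · intro h
      by_cases hlt : (ψ v : ℕ) < (c3 : ℕ)
      · rw [dif_pos hlt] at h
        have hval : (ψ v : ℕ) = (d : ℕ) := by simpa using congrArg Fin.val h
        rw [hcd, if_pos (by omega)]
        apply Fin.ext
        simpa using hval
      · rw [dif_neg hlt] at h
        have hval : (ψ v : ℕ) - 1 = (d : ℕ) := by simpa using congrArg Fin.val h
        rw [hcd, if_neg (by omega)]
        apply Fin.ext
        simp only []
        omega
    · intro h
      rw [hcd] at h
      by_cases hlt : (d : ℕ) < (c3 : ℕ)
      · rw [if_pos hlt] at h
        have hval : (ψ v : ℕ) = (d : ℕ) := by simpa using congrArg Fin.val h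
        rw [dif_pos (by omega)]
        apply Fin.ext
        simpa using hval
      · rw [if_neg hlt] at h
        have hval : (ψ v : ℕ) = (d : ℕ) + 1 := by simpa using congrArg Fin.val h
        rw [dif_neg (by omega)]
        apply Fin.ext
        simp only []
        omega
  rw [hclassd]
  exact hψgood cd


theorem edges_lower_bound_of_balanced_chromatic {V : Type*} [Fintype V] [DecidableEq V]
    (r n q : ℕ) (hr : 2 ≤ r) (parts : Fin r → Finset V) (E : Finset (Finset V))
    (hcard : ∀ i, (parts i).card = n)
    (hdisj : ∀ i j, i ≠ j → Disjoint (parts i) (parts j))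
    (hcover : Finset.univ.biUnion parts = (Finset.univ : Finset V))
    (hedge : ∀ e ∈ E, ∀ i, (e ∩ parts i).card = 1)
    (hq3 : 3 ≤ q)
    (hcol : HasBalancedColoring parts E q)
    (hmin : ¬ HasBalancedColoring parts E (q - 1)) :
    ((q : ℚ) - 1) * n / (r * (r - 1)) ≤ (E.card : ℚ) := by
  classical
  obtain ⟨φ, hφ⟩ := hcol
  set i0 : Fin r := ⟨0, by omega⟩ with hi0
  set a : Fin q → ℕ := fun c => ((Finset.univ.filter (fun v => φ v = c)) ∩ parts i0).card
    with ha
  have hclassdisj : ∀ c ∈ (Finset.univ : Finset (Fin q)), ∀ c' ∈ (Finset.univ : Finset (Fin q)),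
      c ≠ c' → Disjoint ((Finset.univ.filter (fun v => φ v = c)) ∩ parts i0)
        ((Finset.univ.filter (fun v => φ v = c')) ∩ parts i0) := by
    intro c _ c' _ hne
    rw [Finset.disjoint_left]
    intro x hx hx'
    rw [Finset.mem_inter, Finset.mem_filter] at hx hx'
    exact hne (hx.1.2 ▸ hx'.1.2 ▸ rfl)
  have hn : ∑ c, a c = n := by
    have huniv : parts i0 = Finset.univ.biUnion (fun c : Fin q =>
        (Finset.univ.filter (fun v => φ v = c)) ∩ parts i0) := by
      ext v
      simp only [Finset.mem_biUnion, Finset.mem_univ, true_and, Finset.mem_inter,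
        Finset.mem_filter]
      constructor
      · intro h; exact ⟨φ v, rfl, h⟩
      · rintro ⟨c, ⟨-, h⟩⟩; exact h
    calc ∑ c, a c = (Finset.univ.biUnion (fun c : Fin q =>
        (Finset.univ.filter (fun v => φ v = c)) ∩ parts i0)).card :=
          (Finset.card_biUnion hclassdisj).symm
      _ = (parts i0).card := by rw [← huniv]
      _ = n := hcard i0
  set R := r * (r - 1) with hR
  have hR2 : 2 ≤ R := by
    have := Nat.mul_le_mul (show 2 ≤ r from hr) (show 1 ≤ r - 1 by omega)
    omega
  set k := min q (R + 1) with hk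
  have hk3 : 3 ≤ k := le_min hq3 (by omega)
  have hkq : k ≤ q := min_le_left _ _
  have hkR : k - 1 ≤ R := by have := min_le_right q (R + 1); omega
  have hKEY : ∀ S ∈ Finset.powersetCard k (Finset.univ : Finset (Fin q)),
      (∑ cc ∈ S, a cc) ≤ (E.filter fun e => ∀ v ∈ e, φ v ∈ S).card := by
    intro S hS
    by_contra hlt
    push_neg at hlt
    obtain ⟨-, hcardS⟩ := Finset.mem_powersetCard.mp hS
    exact hmin (keyRecolor hr parts E hdisj hedge hq3 φ (fun c => (hφ c).1)
      (fun c => (hφ c).2) i0 S (by omega) hlt)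
  have hsum1 : ∑ S ∈ Finset.powersetCard k (Finset.univ : Finset (Fin q)), ∑ cc ∈ S, a cc
      = n * Nat.choose (q - 1) (k - 1) := by
    rw [sum_powersetCard_sum k (by omega) a, hn, Fintype.card_fin]
  have hsum2 : ∑ S ∈ Finset.powersetCard k (Finset.univ : Finset (Fin q)),
      (E.filter fun e => ∀ v ∈ e, φ v ∈ S).card ≤ E.card * Nat.choose (q - 2) (k - 2) := by
    have hswap : ∑ S ∈ Finset.powersetCard k (Finset.univ : Finset (Fin q)),
        (E.filter fun e => ∀ v ∈ e, φ v ∈ S).card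
        = ∑ e ∈ E, ((Finset.powersetCard k (Finset.univ : Finset (Fin q))).filter
            (fun S => ∀ v ∈ e, φ v ∈ S)).card := by
      simp only [Finset.card_filter]
      rw [Finset.sum_comm]
    rw [hswap]
    have hbound : ∀ e ∈ E, ((Finset.powersetCard k (Finset.univ : Finset (Fin q))).filter
        (fun S => ∀ v ∈ e, φ v ∈ S)).card ≤ Nat.choose (q - 2) (k - 2) := by
      intro e he
      have hnon : (e ∩ parts i0).Nonempty := by
        rw [← Finset.card_pos, hedge e he i0]; omega
      obtain ⟨v0, hv0⟩ := hnon
      have hv0e : v0 ∈ e := (Finset.mem_inter.mp hv0).1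
      have hdiff : ∃ v1 ∈ e, φ v1 ≠ φ v0 := by
        by_contra hcon
        push_neg at hcon
        exact (hφ (φ v0)).1 e he
          (fun v hv => Finset.mem_filter.mpr ⟨Finset.mem_univ v, hcon v hv⟩)
      obtain ⟨v1, hv1e, hv1ne⟩ := hdiff
      have htarget : ((((Finset.univ : Finset (Fin q)).erase (φ v0)).erase (φ v1))).card
          = q - 2 := by
        rw [Finset.card_erase_of_mem (Finset.mem_erase.mpr ⟨hv1ne, Finset.mem_univ _⟩),
          Finset.card_erase_of_mem (Finset.mem_univ _), Finset.card_univ, Fintype.card_fin]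
        omega
      have hrec : ∀ S : Finset (Fin q), φ v0 ∈ S → φ v1 ∈ S →
          insert (φ v0) (insert (φ v1) ((S.erase (φ v0)).erase (φ v1))) = S := by
        intro S hx hy
        rw [Finset.insert_erase (Finset.mem_erase.mpr ⟨hv1ne, hy⟩), Finset.insert_erase hx]
      calc ((Finset.powersetCard k (Finset.univ : Finset (Fin q))).filter
            (fun S => ∀ v ∈ e, φ v ∈ S)).card
          ≤ (Finset.powersetCard (k - 2)
              (((Finset.univ : Finset (Fin q)).erase (φ v0)).erase (φ v1))).card := by
            apply Finset.card_le_card_of_injOn (fun S => (S.erase (φ v0)).erase (φ v1))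
            · intro S hS
              rw [Finset.mem_coe, Finset.mem_filter, Finset.mem_powersetCard] at hS
              have hxS : φ v0 ∈ S := hS.2 v0 hv0e
              have hyS : φ v1 ∈ S := hS.2 v1 hv1e
              rw [Finset.mem_coe, Finset.mem_powersetCard]
              constructor
              · exact Finset.erase_subset_erase _ (Finset.erase_subset_erase _ hS.1.1)
              · rw [Finset.card_erase_of_mem (Finset.mem_erase.mpr ⟨hv1ne, hyS⟩),
                  Finset.card_erase_of_mem hxS, hS.1.2]
                omega
            · intro S hS S' hS' heq
              simp only [Finset.coe_filter, Set.mem_setOf_eq, Finset.mem_powersetCard] at hS hS'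
              have hxS : φ v0 ∈ S := hS.2 v0 hv0e
              have hyS : φ v1 ∈ S := hS.2 v1 hv1e
              have hxS' : φ v0 ∈ S' := hS'.2 v0 hv0e
              have hyS' : φ v1 ∈ S' := hS'.2 v1 hv1e
              have := congrArg (fun T => insert (φ v0) (insert (φ v1) T)) heq
              simpa [hrec S hxS hyS, hrec S' hxS' hyS'] using this
        _ = Nat.choose (q - 2) (k - 2) := by
            rw [Finset.card_powersetCard, htarget]
    calc ∑ e ∈ E, ((Finset.powersetCard k (Finset.univ : Finset (Fin q))).filter
        (fun S => ∀ v ∈ e, φ v ∈ S)).card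
        ≤ ∑ _e ∈ E, Nat.choose (q - 2) (k - 2) := Finset.sum_le_sum hbound
      _ = E.card * Nat.choose (q - 2) (k - 2) := by
          rw [Finset.sum_const, smul_eq_mul]
  have hmain : n * Nat.choose (q - 1) (k - 1) ≤ E.card * Nat.choose (q - 2) (k - 2) := by
    calc n * Nat.choose (q - 1) (k - 1)
        = ∑ S ∈ Finset.powersetCard k (Finset.univ : Finset (Fin q)), ∑ cc ∈ S, a cc :=
          hsum1.symm
      _ ≤ ∑ S ∈ Finset.powersetCard k (Finset.univ : Finset (Fin q)),
          (E.filter fun e => ∀ v ∈ e, φ v ∈ S).card := Finset.sum_le_sum hKEY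
      _ ≤ E.card * Nat.choose (q - 2) (k - 2) := hsum2
  have hC2pos : 0 < Nat.choose (q - 2) (k - 2) := Nat.choose_pos (by omega)
  have hid := chooseId q k (by omega) (by omega)
  have step : (n * (q - 1)) * Nat.choose (q - 2) (k - 2)
      ≤ (E.card * (k - 1)) * Nat.choose (q - 2) (k - 2) := by
    calc (n * (q - 1)) * Nat.choose (q - 2) (k - 2)
        = n * ((q - 1) * Nat.choose (q - 2) (k - 2)) := by ring
      _ = n * ((k - 1) * Nat.choose (q - 1) (k - 1)) := by rw [hid]
      _ = (k - 1) * (n * Nat.choose (q - 1) (k - 1)) := by ring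
      _ ≤ (k - 1) * (E.card * Nat.choose (q - 2) (k - 2)) := Nat.mul_le_mul_left _ hmain
      _ = (E.card * (k - 1)) * Nat.choose (q - 2) (k - 2) := by ring
  have hfin : n * (q - 1) ≤ E.card * (k - 1) := Nat.le_of_mul_le_mul_right step hC2pos
  have hfin2 : n * (q - 1) ≤ E.card * R := hfin.trans (Nat.mul_le_mul le_rfl hkR)
  have hrQ : (0 : ℚ) < (r : ℚ) * ((r : ℚ) - 1) := by
    have h2 : (2 : ℚ) ≤ (r : ℚ) := by exact_mod_cast hr
    nlinarith
  rw [div_le_iff₀ hrQ]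
  have hcast : ((n * (q - 1) : ℕ) : ℚ) ≤ ((E.card * R : ℕ) : ℚ) := by exact_mod_cast hfin2
  rw [hR] at hcast
  rw [Nat.cast_mul, Nat.cast_mul, Nat.cast_mul, Nat.cast_sub (by omega : 1 ≤ q),
    Nat.cast_sub (by omega : 1 ≤ r)] at hcast
  push_cast at hcast ⊢
  linarith
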